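/- arXiv:2202.13597 — 2 statements merged into one kernel-verified Lean document; each statement's English description precedes it below -/
import Mathlib

section
/- Let F ∼ N(μ, σx²) and ε ∼ N(0, σn²) be independent, and let f* be a real number with Y = F + ε. Then the conditional density of Y given the event {F ≤ f*} is p(y) = N(y; μ, σ₊²) · Ψ(g(y)) / Ψ((f* − μ)/σx), where g(y) = (σ₊² f* − σn² μ − σx² y)/(σx σn σ₊) and σ₊² = σx² + σn². -/
open MeasureTheory ProbabilityTheory Real

/-- Gaussian density N(z; m, s²). -/
noncomputable def gauss (m s2 z : ℝ) : ℝ :=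
  (Real.sqrt (2 * Real.pi * s2))⁻¹ * Real.exp (-(z - m) ^ 2 / (2 * s2))

/-- Standard Gaussian density ψ. -/
noncomputable def stdPdf (t : ℝ) : ℝ := gauss 0 1 t

/-- Standard Gaussian CDF Ψ. -/
noncomputable def stdCdf (t : ℝ) : ℝ := ∫ u in Set.Iic t, stdPdf u

lemma gauss_nonneg (m s2 z : ℝ) : 0 ≤ gauss m s2 z := by
  unfold gauss; positivity

lemma stdPdf_eq : stdPdf = gaussianPDFReal 0 1 := by
  ext u
  simp [stdPdf, gauss, gaussianPDFReal]

lemma gaussianPDFReal_eq_gauss (m : ℝ) {s : ℝ} (hs : 0 < s) :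
    gaussianPDFReal m ((s^2).toNNReal) = gauss m (s^2) := by
  ext x
  rw [gaussianPDFReal, gauss, Real.coe_toNNReal _ (sq_nonneg s)]

lemma toNNReal_sq_ne_zero {s : ℝ} (hs : 0 < s) : (s^2).toNNReal ≠ 0 := by
  simp only [ne_eq, Real.toNNReal_eq_zero, not_le]
  positivity

lemma stdCdf_pos (t : ℝ) : 0 < stdCdf t := by
  have hpos : ∀ u, 0 < stdPdf u := by
    intro u; unfold stdPdf gauss; positivity
  have hint : IntegrableOn stdPdf (Set.Iic t) := by
    rw [stdPdf_eq]; exact (integrable_gaussianPDFReal 0 1).integrableOn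
  rw [stdCdf, setIntegral_pos_iff_support_of_nonneg_ae
    (Filter.Eventually.of_forall fun u => (hpos u).le) hint]
  have : Function.support stdPdf = Set.univ := by
    ext u; simp [Function.support, (hpos u).ne']
  rw [this, Set.univ_inter]
  simp

lemma gaussianReal_Iic_std (t : ℝ) :
    gaussianReal 0 1 (Set.Iic t) = ENNReal.ofReal (stdCdf t) := by
  rw [gaussianReal_of_var_ne_zero 0 one_ne_zero, withDensity_apply _ measurableSet_Iic]
  have hint : IntegrableOn stdPdf (Set.Iic t) := by
    rw [stdPdf_eq]; exact (integrable_gaussianPDFReal 0 1).integrableOn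
  rw [stdCdf, ofReal_integral_eq_lintegral_ofReal hint
    (Filter.Eventually.of_forall fun u => by unfold stdPdf gauss; positivity)]
  rfl

lemma gaussianReal_Iic (m : ℝ) {s : ℝ} (hs : 0 < s) (a : ℝ) :
    gaussianReal m ((s^2).toNNReal) (Set.Iic a) = ENNReal.ofReal (stdCdf ((a - m)/s)) := by
  have hmap : gaussianReal m ((s^2).toNNReal)
      = Measure.map (· + m) (Measure.map (s * ·) (gaussianReal 0 1)) := by
    rw [gaussianReal_map_const_mul, gaussianReal_map_add_const, mul_zero, zero_add]
    congr 1
    ext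
    simp [Real.coe_toNNReal _ (sq_nonneg s)]
  rw [hmap, Measure.map_apply (measurable_add_const m) measurableSet_Iic]
  have h1 : (· + m) ⁻¹' Set.Iic a = Set.Iic (a - m) := by
    ext x; simp [le_sub_iff_add_le]
  rw [h1, Measure.map_apply (measurable_const_mul s) measurableSet_Iic]
  have h2 : (s * ·) ⁻¹' Set.Iic (a - m) = Set.Iic ((a - m)/s) := by
    ext x; simp [le_div_iff₀ hs, mul_comm]
  rw [h2, gaussianReal_Iic_std]

lemma lintegral_gauss_Iic (m : ℝ) {s : ℝ} (hs : 0 < s) (a : ℝ) :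
    ∫⁻ x in Set.Iic a, ENNReal.ofReal (gauss m (s^2) x) = ENNReal.ofReal (stdCdf ((a - m)/s)) := by
  rw [← gaussianReal_Iic m hs a, gaussianReal_of_var_ne_zero _ (toNNReal_sq_ne_zero hs),
    withDensity_apply _ measurableSet_Iic]
  congr 1
  ext x
  rw [gaussianPDF_def, gaussianPDFReal_eq_gauss m hs]

lemma gauss_prod {σx σn : ℝ} (hx : 0 < σx) (hn : 0 < σn) (μ x y : ℝ) :
    gauss μ (σx^2) x * gauss x (σn^2) y =
      gauss μ (σx^2 + σn^2) y *
        gauss ((σn^2*μ + σx^2*y)/(σx^2+σn^2)) ((σx*σn/Real.sqrt (σx^2+σn^2))^2) x := by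
  have hsp2 : (0:ℝ) < σx^2 + σn^2 := by positivity
  have hsq : (σx*σn/Real.sqrt (σx^2+σn^2))^2 = σx^2*σn^2/(σx^2+σn^2) := by
    rw [div_pow, Real.sq_sqrt hsp2.le]; ring
  rw [hsq]
  unfold gauss
  rw [mul_mul_mul_comm, ← Real.exp_add, mul_mul_mul_comm _ (Real.exp _), ← Real.exp_add,
    ← mul_inv, ← mul_inv, ← Real.sqrt_mul (by positivity), ← Real.sqrt_mul (by positivity)]
  congr 2
  · field_simp
  · field_simp
    ring

theorem stmt_2 {Ω : Type*} [MeasurableSpace Ω] (P : Measure Ω) [IsProbabilityMeasure P]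
    (F ε : Ω → ℝ) (hFm : Measurable F) (hεm : Measurable ε)
    (μ σx σn fstar : ℝ) (hσx : 0 < σx) (hσn : 0 < σn)
    (hF : Measure.map F P = gaussianReal μ ((σx ^ 2).toNNReal))
    (hε : Measure.map ε P = gaussianReal 0 ((σn ^ 2).toNNReal))
    (hind : IndepFun F ε P) :
    Measure.map (fun ω => F ω + ε ω) (ProbabilityTheory.cond P (F ⁻¹' Set.Iic fstar)) =
      MeasureTheory.volume.withDensity (fun y => ENNReal.ofReal
        (gauss μ (σx ^ 2 + σn ^ 2) y *
          stdCdf (((σx ^ 2 + σn ^ 2) * fstar - σn ^ 2 * μ - σx ^ 2 * y) /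
            (σx * σn * Real.sqrt (σx ^ 2 + σn ^ 2))) /
          stdCdf ((fstar - μ) / σx))) := by
  have hsp2pos : (0:ℝ) < σx^2 + σn^2 := by positivity
  set sp := Real.sqrt (σx^2 + σn^2) with hspdef
  have hsp : 0 < sp := Real.sqrt_pos.mpr hsp2pos
  have hsp2 : sp^2 = σx^2 + σn^2 := Real.sq_sqrt hsp2pos.le
  have hs : 0 < σx * σn / sp := by positivity
  have hAmeas : MeasurableSet (F ⁻¹' Set.Iic fstar) := hFm measurableSet_Iic
  have hPA : P (F ⁻¹' Set.Iic fstar) = ENNReal.ofReal (stdCdf ((fstar - μ)/σx)) := by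
    rw [← Measure.map_apply hFm measurableSet_Iic, hF, gaussianReal_Iic μ hσx]
  have hc : 0 < stdCdf ((fstar - μ)/σx) := stdCdf_pos _
  have hcne : ENNReal.ofReal (stdCdf ((fstar - μ)/σx)) ≠ 0 := by
    simp [ENNReal.ofReal_eq_zero, not_le, hc]
  -- measurability of the 2d gaussian kernels
  have hcont1 : Continuous fun p : ℝ × ℝ => gauss p.1 (σn^2) p.2 := by
    unfold gauss; fun_prop
  have hcontx : Continuous fun x : ℝ => gauss μ (σx^2) x := by
    unfold gauss; fun_prop
  have hm2 : Measurable fun p : ℝ × ℝ =>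
      ENNReal.ofReal (gauss μ (σx^2) p.1) * ENNReal.ofReal (gauss p.1 (σn^2) p.2) :=
    ((hcontx.comp continuous_fst).measurable.ennreal_ofReal).mul
      hcont1.measurable.ennreal_ofReal
  ext S hS
  rw [Measure.map_apply (show Measurable (fun ω => F ω + ε ω) from hFm.add hεm) hS, cond_apply hAmeas, withDensity_apply _ hS]
  have hnum : P ((F ⁻¹' Set.Iic fstar) ∩ (fun ω => F ω + ε ω) ⁻¹' S)
      = ∫⁻ y in S, ENNReal.ofReal (gauss μ (σx^2 + σn^2) y *
          stdCdf (((σx^2 + σn^2) * fstar - σn^2*μ - σx^2*y) / (σx*σn*sp))) := by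
    set T : Set (ℝ × ℝ) := {p | p.1 ≤ fstar ∧ p.1 + p.2 ∈ S} with hTdef
    have hT : MeasurableSet T :=
      (measurableSet_le measurable_fst measurable_const).inter
        ((measurable_fst.add measurable_snd) hS)
    have hpre : (F ⁻¹' Set.Iic fstar) ∩ (fun ω => F ω + ε ω) ⁻¹' S
        = (fun ω => (F ω, ε ω)) ⁻¹' T := rfl
    have hjoint : Measure.map (fun ω => (F ω, ε ω)) P
        = (gaussianReal μ ((σx^2).toNNReal)).prod (gaussianReal 0 ((σn^2).toNNReal)) := by
      rw [← hF, ← hε]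
      exact (indepFun_iff_map_prod_eq_prod_map_map hFm.aemeasurable hεm.aemeasurable).mp hind
    rw [hpre, ← Measure.map_apply (hFm.prodMk hεm) hT, hjoint, Measure.prod_apply hT]
    have hfib : ∀ x, gaussianReal 0 ((σn^2).toNNReal) (Prod.mk x ⁻¹' T)
        = Set.indicator (Set.Iic fstar)
            (fun x => ∫⁻ y in S, ENNReal.ofReal (gauss x (σn^2) y)) x := by
      intro x
      by_cases hx : x ≤ fstar
      · rw [Set.indicator_of_mem (Set.mem_Iic.mpr hx)]
        have h1 : Prod.mk x ⁻¹' T = (· + x) ⁻¹' S := by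
          ext e; simp [hTdef, hx, add_comm]
        rw [h1, ← Measure.map_apply (measurable_add_const x) hS, gaussianReal_map_add_const,
          zero_add, gaussianReal_of_var_ne_zero _ (toNNReal_sq_ne_zero hσn),
          withDensity_apply _ hS]
        refine lintegral_congr fun y => ?_
        rw [gaussianPDF_def, gaussianPDFReal_eq_gauss x hσn]
      · rw [Set.indicator_of_notMem (by simpa using hx)]
        have h1 : Prod.mk x ⁻¹' T = ∅ := by
          ext e; simp [hTdef, hx]
        simp [h1]
    rw [lintegral_congr hfib, lintegral_indicator measurableSet_Iic,
      gaussianReal_of_var_ne_zero _ (toNNReal_sq_ne_zero hσx),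
      restrict_withDensity measurableSet_Iic]
    have hinner : Measurable fun x => ∫⁻ y in S, ENNReal.ofReal (gauss x (σn^2) y) :=
      Measurable.lintegral_prod_right hcont1.measurable.ennreal_ofReal
    rw [lintegral_withDensity_eq_lintegral_mul _ (measurable_gaussianPDF _ _) hinner]
    have hpdfx : (gaussianPDF μ ((σx^2).toNNReal) *
        fun x => ∫⁻ y in S, ENNReal.ofReal (gauss x (σn^2) y))
        = fun x => ∫⁻ y in S,
            ENNReal.ofReal (gauss μ (σx^2) x) * ENNReal.ofReal (gauss x (σn^2) y) := by
      funext x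
      simp only [Pi.mul_apply, gaussianPDF_def, gaussianPDFReal_eq_gauss μ hσx]
      rw [← lintegral_const_mul _
        (show Measurable fun y => ENNReal.ofReal (gauss x (σn^2) y) from
          (hcont1.comp (Continuous.prodMk_right x)).measurable.ennreal_ofReal)]
    rw [hpdfx, lintegral_lintegral_swap hm2.aemeasurable]
    refine lintegral_congr fun y => ?_
    have harg : (fstar - (σn^2*μ + σx^2*y)/(σx^2+σn^2)) / (σx*σn/sp)
        = ((σx^2 + σn^2) * fstar - σn^2*μ - σx^2*y) / (σx*σn*sp) := by
      rw [← hsp2]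
      field_simp
      ring
    calc ∫⁻ x in Set.Iic fstar,
          ENNReal.ofReal (gauss μ (σx^2) x) * ENNReal.ofReal (gauss x (σn^2) y)
        = ∫⁻ x in Set.Iic fstar, ENNReal.ofReal (gauss μ (σx^2+σn^2) y) *
            ENNReal.ofReal (gauss ((σn^2*μ + σx^2*y)/(σx^2+σn^2)) ((σx*σn/sp)^2) x) := by
          refine lintegral_congr fun x => ?_
          rw [← ENNReal.ofReal_mul (gauss_nonneg _ _ _), gauss_prod hσx hσn μ x y,
            ENNReal.ofReal_mul (gauss_nonneg _ _ _)]
      _ = ENNReal.ofReal (gauss μ (σx^2+σn^2) y) *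
            ∫⁻ x in Set.Iic fstar,
              ENNReal.ofReal (gauss ((σn^2*μ + σx^2*y)/(σx^2+σn^2)) ((σx*σn/sp)^2) x) := by
          rw [lintegral_const_mul _
            (show Measurable fun x =>
                ENNReal.ofReal (gauss ((σn^2*μ + σx^2*y)/(σx^2+σn^2)) ((σx*σn/sp)^2) x) from
              ((by unfold gauss; fun_prop : Continuous fun x =>
                gauss ((σn^2*μ + σx^2*y)/(σx^2+σn^2)) ((σx*σn/sp)^2) x)).measurable.ennreal_ofReal)]
      _ = ENNReal.ofReal (gauss μ (σx^2+σn^2) y * stdCdf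
            (((σx^2 + σn^2) * fstar - σn^2*μ - σx^2*y) / (σx*σn*sp))) := by
          rw [lintegral_gauss_Iic _ hs, harg, ← ENNReal.ofReal_mul (gauss_nonneg _ _ _)]
  rw [hnum, hPA]
  have hrhs : ∀ y : ℝ, ENNReal.ofReal
      (gauss μ (σx^2 + σn^2) y *
        stdCdf (((σx^2 + σn^2) * fstar - σn^2*μ - σx^2*y) / (σx*σn*sp)) /
        stdCdf ((fstar - μ) / σx))
      = ENNReal.ofReal (gauss μ (σx^2 + σn^2) y *
          stdCdf (((σx^2 + σn^2) * fstar - σn^2*μ - σx^2*y) / (σx*σn*sp))) *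
        (ENNReal.ofReal (stdCdf ((fstar - μ) / σx)))⁻¹ := by
    intro y
    rw [ENNReal.ofReal_div_of_pos hc, div_eq_mul_inv]
  simp only [hrhs]
  rw [lintegral_mul_const' _ _ (ENNReal.inv_ne_top.mpr hcne), mul_comm]
end

section
/- The function y ↦ N(y; μ, σ₊²) · Ψ(g(y)) / Ψ((f* − μ)/σx), with g(y) = (σ₊² f* − σn² μ − σx² y)/(σx σn σ₊) and σ₊² = σx² + σn² (σx, σn > 0), is a probability density: it is nonnegative and integrates to 1 over ℝ. -/
open MeasureTheory ProbabilityTheory Real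

lemma gauss_pos (m s2 z : ℝ) (h : 0 < s2) : 0 < gauss m s2 z := by
  unfold gauss
  have : 0 < Real.sqrt (2 * Real.pi * s2) := Real.sqrt_pos.2 (by positivity)
  positivity

lemma stdPdf_nonneg (z : ℝ) : 0 ≤ stdPdf z := gauss_nonneg 0 1 z
lemma stdPdf_pos (z : ℝ) : 0 < stdPdf z := gauss_pos 0 1 z one_pos

lemma stdPdf_continuous : Continuous stdPdf := by
  unfold stdPdf gauss
  continuity

lemma gauss_continuous (m s2 : ℝ) : Continuous (gauss m s2) := by
  unfold gauss; continuity

lemma gauss_eq_pdf (m : ℝ) {s2 : ℝ} (h : 0 ≤ s2) :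
    gauss m s2 = gaussianPDFReal m s2.toNNReal := by
  funext z
  simp [gauss, gaussianPDFReal, Real.coe_toNNReal _ h]

lemma integrable_gauss (m : ℝ) {s2 : ℝ} (h : 0 < s2) : Integrable (gauss m s2) := by
  rw [gauss_eq_pdf m h.le]; exact integrable_gaussianPDFReal _ _

lemma integral_gauss (m : ℝ) {s2 : ℝ} (h : 0 < s2) : ∫ z, gauss m s2 z = 1 := by
  rw [gauss_eq_pdf m h.le]
  exact integral_gaussianPDFReal_eq_one m (by simp [Real.toNNReal_eq_zero, not_le, h])

lemma integrable_stdPdf : Integrable stdPdf := integrable_gauss 0 one_pos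

lemma integral_stdPdf : ∫ z, stdPdf z = 1 := integral_gauss 0 one_pos

lemma stdCdf_nonneg (t : ℝ) : 0 ≤ stdCdf t :=
  setIntegral_nonneg measurableSet_Iic fun z _ => stdPdf_nonneg z

lemma stdPdf_shift (c t : ℝ) : stdPdf (t - c) = gauss c 1 t := by
  simp [stdPdf, gauss]

lemma iic_subst (m c : ℝ) {s : ℝ} (hs : 0 < s) :
    ∫ x in Set.Iic c, stdPdf ((x - m)/s) = s * stdCdf ((c - m)/s) := by
  have hφ : MeasurableEmbedding (fun u : ℝ => s * u + m) :=
    ((Homeomorph.mulLeft₀ s hs.ne').trans (Homeomorph.addRight m)).measurableEmbedding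
  have hmap : Measure.map (fun u : ℝ => s * u + m) volume
      = ENNReal.ofReal s⁻¹ • volume := by
    have h1 : (fun u : ℝ => s * u + m) = (fun x : ℝ => x + m) ∘ (fun u : ℝ => s * u) := rfl
    rw [h1, ← Measure.map_map (measurable_add_const m) (measurable_const_mul s),
      Real.map_volume_mul_left hs.ne', Measure.map_smul,
      map_add_right_eq_self volume m, abs_of_pos (inv_pos.2 hs)]
  have hset : (fun u : ℝ => s * u + m) ⁻¹' (Set.Iic c) = Set.Iic ((c - m)/s) := by
    ext u
    simp only [Set.mem_preimage, Set.mem_Iic]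
    rw [le_div_iff₀ hs]
    constructor <;> intro h <;> linarith
  have := hφ.setIntegral_map (s := Set.Iic c) (g := fun x => stdPdf ((x - m)/s)) (μ := volume)
  rw [hmap, Measure.restrict_smul, integral_smul_measure, hset] at this
  have h2 : ∀ u : ℝ, ((s * u + m - m)/s) = u := by
    intro u; field_simp; ring
  simp only [h2] at this
  rw [ENNReal.toReal_ofReal (by positivity)] at this
  rw [smul_eq_mul] at this
  rw [stdCdf, ← this]
  field_simp

lemma gauss_scale (m : ℝ) {V : ℝ} (hV : 0 < V) (x : ℝ) :
    gauss m V x = (Real.sqrt V)⁻¹ * stdPdf ((x - m)/Real.sqrt V) := by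
  unfold stdPdf gauss
  rw [show (2 * Real.pi * V) = (2 * Real.pi * 1) * V by ring,
    Real.sqrt_mul (by positivity), mul_inv]
  rw [show ((x - m)/Real.sqrt V - 0) ^ 2 = (x - m) ^ 2 / V by
    rw [sub_zero, div_pow, Real.sq_sqrt hV.le]]
  ring_nf

lemma integral_Iic_gauss (m c : ℝ) {V : ℝ} (hV : 0 < V) :
    ∫ t in Set.Iic c, gauss m V t = stdCdf ((c - m)/Real.sqrt V) := by
  have hs : 0 < Real.sqrt V := Real.sqrt_pos.2 hV
  rw [integral_congr_ae (Filter.Eventually.of_forall fun t => gauss_scale m hV t)]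
  rw [integral_const_mul, iic_subst m c hs]
  field_simp

lemma conv_gauss (m β : ℝ) {S : ℝ} (hS : 0 < S) (t : ℝ) :
    ∫ y, gauss m S y * stdPdf (t - β * y) = gauss (β * m) (1 + β ^ 2 * S) t := by
  have hA : 0 < S⁻¹ + β ^ 2 := by positivity
  set A := S⁻¹ + β ^ 2 with hAdef
  set d := (m / S + β * t) / A with hddef
  set E := -((m ^ 2 / S + t ^ 2) - (m / S + β * t) ^ 2 / A) / 2 with hEdef
  have hexp : ∀ y : ℝ, -(y - m) ^ 2 / (2 * S) + -(t - β * y - 0) ^ 2 / (2 * 1)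
      = E + (-(A / 2) * (y - d) ^ 2) := by
    intro y
    rw [hEdef, hddef, hAdef]
    field_simp
    ring
  have step1 : ∀ y, gauss m S y * stdPdf (t - β * y)
      = ((Real.sqrt (2 * Real.pi * S))⁻¹ * (Real.sqrt (2 * Real.pi * 1))⁻¹ * Real.exp E)
        * Real.exp (-(A / 2) * (y - d) ^ 2) := by
    intro y
    unfold stdPdf gauss
    calc (Real.sqrt (2 * Real.pi * S))⁻¹ * Real.exp (-(y - m) ^ 2 / (2 * S))
        * ((Real.sqrt (2 * Real.pi * 1))⁻¹ * Real.exp (-(t - β * y - 0) ^ 2 / (2 * 1)))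
        = (Real.sqrt (2 * Real.pi * S))⁻¹ * (Real.sqrt (2 * Real.pi * 1))⁻¹
          * Real.exp (-(y - m) ^ 2 / (2 * S) + -(t - β * y - 0) ^ 2 / (2 * 1)) := by
          rw [Real.exp_add]; ring
      _ = _ := by rw [hexp y, Real.exp_add]; ring
  rw [integral_congr_ae (Filter.Eventually.of_forall step1), integral_const_mul,
    integral_sub_right_eq_self (fun y => Real.exp (-(A/2) * y ^ 2)) d,
    integral_gaussian]
  have hV : (0:ℝ) < 1 + β ^ 2 * S := by positivity
  have hconst : (Real.sqrt (2 * Real.pi * S))⁻¹ * (Real.sqrt (2 * Real.pi * 1))⁻¹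
      * Real.sqrt (Real.pi / (A / 2)) = (Real.sqrt (2 * Real.pi * (1 + β ^ 2 * S)))⁻¹ := by
    rw [← Real.sqrt_inv, ← Real.sqrt_inv, ← Real.sqrt_inv,
      ← Real.sqrt_mul (by positivity), ← Real.sqrt_mul (by positivity)]
    congr 1
    rw [hAdef]
    field_simp
  have hexpE : E = -(t - β * m) ^ 2 / (2 * (1 + β ^ 2 * S)) := by
    rw [hEdef, hAdef]
    field_simp
    ring
  unfold gauss
  rw [← hconst, hexpE]
  ring

lemma integrable_kernel (m β : ℝ) {S : ℝ} (hS : 0 < S) :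
    Integrable (fun p : ℝ × ℝ => gauss m S p.1 * stdPdf (p.2 - β * p.1))
      ((volume : Measure ℝ).prod volume) := by
  have hcont : Continuous fun p : ℝ × ℝ => gauss m S p.1 * stdPdf (p.2 - β * p.1) :=
    ((gauss_continuous m S).comp continuous_fst).mul
      (stdPdf_continuous.comp (continuous_snd.sub (continuous_const.mul continuous_fst)))
  rw [integrable_prod_iff hcont.aestronglyMeasurable]
  constructor
  · refine Filter.Eventually.of_forall fun y => ?_
    have heq : (fun t => gauss m S y * stdPdf (t - β * y))
        = fun t => gauss m S y * gauss (β * y) 1 t := by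
      funext t; rw [stdPdf_shift]
    rw [heq]
    exact (integrable_gauss (β * y) one_pos).const_mul _
  · have heq : (fun y => ∫ t, ‖gauss m S y * stdPdf (t - β * y)‖)
        = fun y => gauss m S y := by
      funext y
      have h1 : ∀ t : ℝ, ‖gauss m S y * stdPdf (t - β * y)‖
          = gauss m S y * gauss (β * y) 1 t := by
        intro t
        rw [stdPdf_shift, Real.norm_of_nonneg (mul_nonneg (gauss_nonneg _ _ _) (gauss_nonneg _ _ _))]
      rw [integral_congr_ae (Filter.Eventually.of_forall h1), integral_const_mul,
        integral_gauss _ one_pos, mul_one]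
    rw [heq]
    exact integrable_gauss m hS

theorem stmt_3 (μ fstar σx σn : ℝ) (hσx : 0 < σx) (hσn : 0 < σn) :
    (∀ y : ℝ, 0 ≤ gauss μ (σx ^ 2 + σn ^ 2) y *
        stdCdf (((σx ^ 2 + σn ^ 2) * fstar - σn ^ 2 * μ - σx ^ 2 * y) /
          (σx * σn * Real.sqrt (σx ^ 2 + σn ^ 2))) /
        stdCdf ((fstar - μ) / σx)) ∧
    (∫ y : ℝ, gauss μ (σx ^ 2 + σn ^ 2) y *
        stdCdf (((σx ^ 2 + σn ^ 2) * fstar - σn ^ 2 * μ - σx ^ 2 * y) /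
          (σx * σn * Real.sqrt (σx ^ 2 + σn ^ 2))) /
        stdCdf ((fstar - μ) / σx)) = 1 := by
  have hSpos : (0:ℝ) < σx ^ 2 + σn ^ 2 := by positivity
  constructor
  · intro y
    exact div_nonneg (mul_nonneg (gauss_nonneg _ _ _) (stdCdf_nonneg _)) (stdCdf_nonneg _)
  obtain ⟨σp, hσpdef⟩ : ∃ t : ℝ, Real.sqrt (σx ^ 2 + σn ^ 2) = t := ⟨_, rfl⟩
  have hσp : 0 < σp := hσpdef ▸ Real.sqrt_pos.2 hSpos
  have hσp2 : σp ^ 2 = σx ^ 2 + σn ^ 2 := by rw [← hσpdef]; exact Real.sq_sqrt hSpos.le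
  rw [hσpdef]
  obtain ⟨β, hβdef⟩ : ∃ t : ℝ, σx / (σn * σp) = t := ⟨_, rfl⟩
  obtain ⟨α, hαdef⟩ : ∃ t : ℝ, ((σx ^ 2 + σn ^ 2) * fstar - σn ^ 2 * μ) / (σx * σn * σp) = t := ⟨_, rfl⟩
  have harg : ∀ y : ℝ, ((σx ^ 2 + σn ^ 2) * fstar - σn ^ 2 * μ - σx ^ 2 * y) / (σx * σn * σp)
      = α - β * y := by
    intro y
    rw [← hαdef, ← hβdef]
    field_simp
  have hcdf : ∀ y : ℝ, stdCdf (α - β * y) = ∫ t in Set.Iic α, stdPdf (t - β * y) := by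
    intro y
    have := iic_subst (β * y) α one_pos
    simp only [div_one, one_mul] at this
    rw [this]
  have hswap : Integrable (fun p : ℝ × ℝ => gauss μ (σx ^ 2 + σn ^ 2) p.1 * stdPdf (p.2 - β * p.1))
      ((volume : Measure ℝ).prod (volume.restrict (Set.Iic α))) := by
    have h := integrable_kernel μ β hSpos
    have heq : (volume : Measure ℝ).prod (volume.restrict (Set.Iic α))
        = (((volume : Measure ℝ)).prod volume).restrict (Set.univ ×ˢ Set.Iic α) := by
      rw [show (volume : Measure ℝ).prod (volume.restrict (Set.Iic α))
          = ((volume : Measure ℝ).restrict Set.univ).prod (volume.restrict (Set.Iic α)) by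
        rw [Measure.restrict_univ]]
      exact Measure.prod_restrict _ _
    rw [heq]
    exact h.restrict
  have key : (∫ y : ℝ, gauss μ (σx ^ 2 + σn ^ 2) y * stdCdf (α - β * y))
      = stdCdf ((fstar - μ) / σx) := by
    calc (∫ y : ℝ, gauss μ (σx ^ 2 + σn ^ 2) y * stdCdf (α - β * y))
        = ∫ y : ℝ, ∫ t in Set.Iic α, gauss μ (σx ^ 2 + σn ^ 2) y * stdPdf (t - β * y) := by
          refine integral_congr_ae (Filter.Eventually.of_forall fun y => ?_)
          dsimp only
          rw [hcdf y, ← integral_const_mul]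
      _ = ∫ t in Set.Iic α, ∫ y : ℝ, gauss μ (σx ^ 2 + σn ^ 2) y * stdPdf (t - β * y) :=
          integral_integral_swap hswap
      _ = ∫ t in Set.Iic α, gauss (β * μ) (1 + β ^ 2 * (σx ^ 2 + σn ^ 2)) t := by
          refine integral_congr_ae (Filter.Eventually.of_forall fun t => ?_)
          exact conv_gauss μ β hSpos t
      _ = stdCdf ((α - β * μ) / Real.sqrt (1 + β ^ 2 * (σx ^ 2 + σn ^ 2))) :=
          integral_Iic_gauss _ _ (by positivity)
      _ = stdCdf ((fstar - μ) / σx) := by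
          congr 1
          have h1 : 1 + β ^ 2 * (σx ^ 2 + σn ^ 2) = (σp / σn) ^ 2 := by
            rw [← hβdef, ← hσp2]
            field_simp
            linear_combination (-1) * hσp2
          rw [h1, Real.sqrt_sq (by positivity), ← hαdef, ← hβdef, ← hσp2]
          field_simp
          linear_combination μ * hσp2
  simp only [harg]
  rw [integral_div, key, div_self (stdCdf_pos _).ne']
end
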